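/- Let f : [0,∞) → ℝ be a bounded, nonnegative, twice-differentiable function satisfying f''(r) ≥ m²·f(r) for all r ≥ 0, where m > 0. Then f'(r) ≤ 0 for all r ≥ 0, and there exists a constant C > 0 such that f(r) ≤ C·e^{-m·r} for all r ≥ 0. -/

import Mathlib

/-- A bounded nonnegative twice-differentiable function on `[0,∞)` with
`f'' ≥ m² f` (m > 0) has nonpositive derivative and decays exponentially. -/
theorem stmt_0 (f : ℝ → ℝ) (m : ℝ) (hm : 0 < m)
    (hf1 : ∀ r ≥ (0:ℝ), DifferentiableAt ℝ f r)
    (hf2 : ∀ r ≥ (0:ℝ), DifferentiableAt ℝ (deriv f) r)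
    (hbdd : ∃ M : ℝ, ∀ r ≥ (0:ℝ), f r ≤ M)
    (hnn : ∀ r ≥ (0:ℝ), 0 ≤ f r)
    (hineq : ∀ r ≥ (0:ℝ), m ^ 2 * f r ≤ deriv (deriv f) r) :
    (∀ r ≥ (0:ℝ), deriv f r ≤ 0) ∧
    ∃ C > (0:ℝ), ∀ r ≥ (0:ℝ), f r ≤ C * Real.exp (-m * r) := by
  obtain ⟨M, hM⟩ := hbdd
  have hM0 : (0:ℝ) ≤ M := le_trans (hnn 0 le_rfl) (hM 0 le_rfl)
  have hfc : ContinuousOn f (Set.Ici 0) := fun x hx =>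
    (hf1 x hx).continuousAt.continuousWithinAt
  have hf'c : ContinuousOn (deriv f) (Set.Ici 0) := fun x hx =>
    (hf2 x hx).continuousAt.continuousWithinAt
  -- deriv f is monotone on [0, ∞)
  have hmono : MonotoneOn (deriv f) (Set.Ici 0) := by
    apply monotoneOn_of_deriv_nonneg (convex_Ici 0) hf'c
    · intro x hx
      rw [interior_Ici] at hx
      exact (hf2 x hx.le).differentiableWithinAt
    · intro x hx
      rw [interior_Ici] at hx
      have h1 := hineq x hx.le
      nlinarith [hnn x hx.le, sq_nonneg m]
  -- Part 1: f' ≤ 0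
  have part1 : ∀ r ≥ (0:ℝ), deriv f r ≤ 0 := by
    intro r₀ hr₀
    by_contra hpos
    push_neg at hpos
    set a := deriv f r₀ with ha
    have hp : MonotoneOn (fun s => f s - a * s) (Set.Ici r₀) := by
      apply monotoneOn_of_deriv_nonneg (convex_Ici r₀)
      · exact (hfc.mono (Set.Ici_subset_Ici.2 hr₀)).sub
          ((continuous_const.mul continuous_id).continuousOn)
      · intro x hx
        rw [interior_Ici] at hx
        exact ((hf1 x (le_trans hr₀ hx.le)).sub
          ((differentiable_id.const_mul a) x)).differentiableWithinAt
      · intro x hx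
        rw [interior_Ici] at hx
        have hd : deriv (fun s => f s - a * s) x = deriv f x - a := by
          have h1 : HasDerivAt (fun s => f s - a * s) (deriv f x - a * 1) x :=
            ((hf1 x (le_trans hr₀ hx.le)).hasDerivAt).sub ((hasDerivAt_id x).const_mul a)
          simpa using h1.deriv
        rw [hd]
        have := hmono (Set.mem_Ici.2 hr₀) (Set.mem_Ici.2 (le_trans hr₀ hx.le)) hx.le
        linarith
    set s := r₀ + (M - f r₀ + 1) / a with hs
    have hsr : r₀ ≤ s := by
      have h0 : 0 ≤ (M - f r₀ + 1) / a := div_nonneg (by linarith [hM r₀ hr₀]) hpos.le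
      rw [hs]
      linarith
    have hkey := hp (Set.mem_Ici.2 le_rfl) (Set.mem_Ici.2 hsr) hsr
    have hfs : f s ≤ M := hM s (le_trans hr₀ hsr)
    have has : a * s = a * r₀ + (M - f r₀ + 1) := by
      have hane : a ≠ 0 := ne_of_gt hpos
      rw [hs]
      field_simp
    simp only at hkey
    linarith
  -- Part 2: f' + m f ≤ 0
  have claim2 : ∀ r ≥ (0:ℝ), deriv f r + m * f r ≤ 0 := by
    have hhmono : MonotoneOn (fun s => Real.exp (-(m*s)) * (deriv f s + m * f s))
        (Set.Ici 0) := by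
      apply monotoneOn_of_deriv_nonneg (convex_Ici 0)
      · exact ((Real.continuous_exp.comp
          ((continuous_const.mul continuous_id).neg)).continuousOn).mul
          (hf'c.add (continuousOn_const.mul hfc))
      · intro x hx
        rw [interior_Ici] at hx
        have he : HasDerivAt (fun s => Real.exp (-(m*s))) (Real.exp (-(m*x)) * -(m*1)) x :=
          (((hasDerivAt_id x).const_mul m).neg).exp
        have hi : HasDerivAt (fun s => deriv f s + m * f s)
            (deriv (deriv f) x + m * deriv f x) x :=
          (hf2 x hx.le).hasDerivAt.add (((hf1 x hx.le).hasDerivAt).const_mul m)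
        exact (he.mul hi).differentiableAt.differentiableWithinAt
      · intro x hx
        rw [interior_Ici] at hx
        have he : HasDerivAt (fun s => Real.exp (-(m*s))) (Real.exp (-(m*x)) * -(m*1)) x :=
          (((hasDerivAt_id x).const_mul m).neg).exp
        have hi : HasDerivAt (fun s => deriv f s + m * f s)
            (deriv (deriv f) x + m * deriv f x) x :=
          (hf2 x hx.le).hasDerivAt.add (((hf1 x hx.le).hasDerivAt).const_mul m)
        rw [show deriv (fun s => Real.exp (-(m*s)) * (deriv f s + m * f s)) x = _ from (he.mul hi).deriv]
        have h1 := hineq x hx.le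
        have h2 : 0 ≤ Real.exp (-(m*x)) * (deriv (deriv f) x - m^2 * f x) :=
          mul_nonneg (Real.exp_pos _).le (by linarith)
        nlinarith [Real.exp_pos (-(m*x))]
    intro r₀ hr₀
    by_contra hpos
    push_neg at hpos
    set c := Real.exp (-(m*r₀)) * (deriv f r₀ + m * f r₀) with hc
    have hcpos : 0 < c := mul_pos (Real.exp_pos _) hpos
    set s := max r₀ (M / c) with hs
    have hsr : r₀ ≤ s := le_max_left _ _
    have hs0 : (0:ℝ) ≤ s := le_trans hr₀ hsr
    have hsM : M / c ≤ s := le_max_right _ _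
    have h1 : c ≤ Real.exp (-(m*s)) * (deriv f s + m * f s) :=
      hhmono (Set.mem_Ici.2 hr₀) (Set.mem_Ici.2 hs0) hsr
    have hE : Real.exp (-(m*s)) * Real.exp (m*s) = 1 := by
      rw [← Real.exp_add]; simp
    have key : c * Real.exp (m*s) ≤ deriv f s + m * f s := by
      have h2 := mul_le_mul_of_nonneg_right h1 (Real.exp_pos (m*s)).le
      calc c * Real.exp (m*s) ≤ Real.exp (-(m*s)) * (deriv f s + m * f s) * Real.exp (m*s) := h2
        _ = (deriv f s + m * f s) * (Real.exp (-(m*s)) * Real.exp (m*s)) := by ring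
        _ = deriv f s + m * f s := by rw [hE, mul_one]
    have hX : deriv f s + m * f s ≤ m * M := by
      have := part1 s hs0
      have := hM s hs0
      nlinarith
    have hexp : m * s + 1 ≤ Real.exp (m*s) := Real.add_one_le_exp (m*s)
    have h3 : c * (m * s + 1) ≤ c * Real.exp (m*s) :=
      mul_le_mul_of_nonneg_left hexp hcpos.le
    have hMc : c * (M / c) = M := by field_simp
    have h4 : (c * m) * (M / c) ≤ (c * m) * s :=
      mul_le_mul_of_nonneg_left hsM (mul_nonneg hcpos.le hm.le)
    nlinarith [h3, key, hX, h4, hMc]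
  -- Part 3: exponential decay
  have hanti : AntitoneOn (fun s => Real.exp (m*s) * f s) (Set.Ici 0) := by
    apply antitoneOn_of_deriv_nonpos (convex_Ici 0)
    · exact ((Real.continuous_exp.comp (continuous_const.mul continuous_id)).continuousOn).mul hfc
    · intro x hx
      rw [interior_Ici] at hx
      have he : HasDerivAt (fun s => Real.exp (m*s)) (Real.exp (m*x) * (m*1)) x :=
        ((hasDerivAt_id x).const_mul m).exp
      exact (he.mul (hf1 x hx.le).hasDerivAt).differentiableAt.differentiableWithinAt
    · intro x hx
      rw [interior_Ici] at hx
      have he : HasDerivAt (fun s => Real.exp (m*s)) (Real.exp (m*x) * (m*1)) x :=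
        ((hasDerivAt_id x).const_mul m).exp
      rw [show deriv (fun s => Real.exp (m*s) * f s) x = _ from (he.mul (hf1 x hx.le).hasDerivAt).deriv]
      have h1 := claim2 x hx.le
      have h2 : Real.exp (m*x) * (deriv f x + m * f x) ≤ 0 :=
        mul_nonpos_of_nonneg_of_nonpos (Real.exp_pos _).le h1
      nlinarith [Real.exp_pos (m*x)]
  refine ⟨part1, f 0 + 1, by linarith [hnn 0 le_rfl], ?_⟩
  intro r hr
  have h1 : Real.exp (m*r) * f r ≤ Real.exp (m*0) * f 0 :=
    hanti (Set.mem_Ici.2 le_rfl) (Set.mem_Ici.2 hr) hr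
  simp only [mul_zero, Real.exp_zero, one_mul] at h1
  have hE : Real.exp (m*r) * Real.exp (-(m*r)) = 1 := by
    rw [← Real.exp_add]; simp
  have h2 : Real.exp (m*r) * f r ≤ f 0 + 1 := by linarith
  have h3 := mul_le_mul_of_nonneg_right h2 (Real.exp_pos (-(m*r))).le
  have h4 : Real.exp (m*r) * f r * Real.exp (-(m*r)) = f r := by
    calc Real.exp (m*r) * f r * Real.exp (-(m*r))
        = f r * (Real.exp (m*r) * Real.exp (-(m*r))) := by ring
      _ = f r := by rw [hE, mul_one]
  rw [h4] at h3
  calc f r ≤ (f 0 + 1) * Real.exp (-(m*r)) := h3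
    _ = (f 0 + 1) * Real.exp (-m * r) := by rw [neg_mul]
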